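/- In (Z/8Z)[x₁,x₂][T₁,T₂] with J = ⟨x₁T₂ − x₂T₁, 4T₁, 4T₂⟩: for every nonzero divisor h ∈ (Z/8Z)[x₁,x₂] and every natural number ℓ, h^ℓ·T₁³ ∉ J. Consequently the kernel of the Rees presentation of I = ⟨2x₁,2x₂⟩ is not equal to any saturation J : h^∞ of J at a nonzero divisor h. -/

import Mathlib

open MvPolynomial

/-- Example 4.4 (main part): over `Z/8Z[x₁,x₂]` with `J = ⟨x₁T₂ − x₂T₁, 4T₁, 4T₂⟩`, for
every nonzero divisor `h` of `Z/8Z[x₁,x₂]` and every `ℓ`, `h^ℓ·T₁³ ∉ J`; consequently the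
kernel of the Rees presentation of `I = ⟨2x₁, 2x₂⟩` is not the saturation `J : h^∞` for
any nonzero divisor `h`. -/
theorem stmt16 :
    letI P := MvPolynomial (Fin 2) (ZMod 8)
    letI φ : MvPolynomial (Fin 2) P →ₐ[P] MvPolynomial (Fin 1) P :=
      aeval (fun i : Fin 2 => C ((2 : P) * X i) * X (0 : Fin 1))
    letI J : Ideal (MvPolynomial (Fin 2) P) :=
      Ideal.span {C (X 0 : P) * X 1 - C (X 1 : P) * X 0, 4 * X 0, 4 * X 1}
    (∀ h ∈ nonZeroDivisors P, ∀ ℓ : ℕ,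
        C (h ^ ℓ) * (X 0 : MvPolynomial (Fin 2) P) ^ 3 ∉ J) ∧
    (∀ h ∈ nonZeroDivisors P,
        {q : MvPolynomial (Fin 2) P | ∃ ℓ : ℕ, C (h ^ ℓ) * q ∈ J} ≠
        {q : MvPolynomial (Fin 2) P | φ q = 0}) := by
  set P := MvPolynomial (Fin 2) (ZMod 8) with hP
  set J : Ideal (MvPolynomial (Fin 2) P) :=
    Ideal.span {C (X 0 : P) * X 1 - C (X 1 : P) * X 0, 4 * X 0, 4 * X 1} with hJ
  set φ : MvPolynomial (Fin 2) P →ₐ[P] MvPolynomial (Fin 1) P :=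
    aeval (fun i : Fin 2 => C ((2 : P) * X i) * X (0 : Fin 1)) with hφ
  have hx : (2 : P) * X 0 ^ 3 ≠ 0 := by
    intro h0
    have := congrArg (coeff (Finsupp.single 0 3)) h0
    have h2 : (2 : P) = C (2 : ZMod 8) := by
      simp [map_ofNat]
    rw [h2, coeff_C_mul, coeff_X_pow] at this
    simp at this
    exact absurd this (by decide)
  have key : ∀ h ∈ nonZeroDivisors P, ∀ ℓ : ℕ,
      C (h ^ ℓ) * (X 0 : MvPolynomial (Fin 2) P) ^ 3 ∉ J := by
    intro h hh ℓ hmem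
    set E : MvPolynomial (Fin 2) P →ₐ[P] P := aeval (fun i : Fin 2 => (X i : P)) with hE
    have h1 : E (C (h ^ ℓ) * X 0 ^ 3) ∈ J.map (E : MvPolynomial (Fin 2) P →+* P) :=
      Ideal.mem_map_of_mem _ hmem
    have h2 : J.map (E : MvPolynomial (Fin 2) P →+* P) ≤ Ideal.span {(4 : P)} := by
      rw [hJ, Ideal.map_span]
      apply Ideal.span_le.2
      rintro y ⟨z, hz, rfl⟩
      simp only [Set.mem_insert_iff, Set.mem_singleton_iff] at hz
      rcases hz with rfl | rfl | rfl
      · simp [hE, mul_comm]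
      · refine Ideal.mem_span_singleton.2 ⟨X 0, ?_⟩
        simp [hE, mul_comm]
      · refine Ideal.mem_span_singleton.2 ⟨X 1, ?_⟩
        simp [hE, mul_comm]
    have h3 : h ^ ℓ * X 0 ^ 3 ∈ Ideal.span {(4 : P)} := by
      have := h2 h1
      simpa [hE, algebraMap_eq] using this
    obtain ⟨w, hw⟩ := Ideal.mem_span_singleton.1 h3
    have h4 : (2 : P) * X 0 ^ 3 * h ^ ℓ = 0 := by
      have h8 : (8 : P) = 0 := by
        rw [show (8 : P) = C (8 : ZMod 8) from by simp [map_ofNat],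
          show (8 : ZMod 8) = 0 from by decide, map_zero]
      calc (2 : P) * X 0 ^ 3 * h ^ ℓ = 2 * (h ^ ℓ * X 0 ^ 3) := by ring
      _ = 2 * (4 * w) := by rw [hw]
      _ = 8 * w := by ring
      _ = 0 := by rw [h8, zero_mul]
    exact hx ((pow_mem hh ℓ).2 _ h4)
  refine ⟨key, ?_⟩
  intro h hh heq
  have hker : (X 0 : MvPolynomial (Fin 2) P) ^ 3 ∈ {q : MvPolynomial (Fin 2) P | φ q = 0} := by
    have h8 : (8 : P) = 0 := by
      rw [show (8 : P) = C (8 : ZMod 8) from by simp [map_ofNat],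
        show (8 : ZMod 8) = 0 from by decide, map_zero]
    show φ (X 0 ^ 3) = 0
    rw [map_pow]
    have : φ (X 0) = C ((2 : P) * X 0) * X 0 := by simp [hφ, aeval_X]
    rw [this]
    rw [mul_pow, ← map_pow]
    have : ((2 : P) * X 0) ^ 3 = 0 := by
      have : ((2 : P) * X 0) ^ 3 = 8 * X 0 ^ 3 := by ring
      rw [this, h8, zero_mul]
    rw [this, map_zero, zero_mul]
  rw [← heq] at hker
  obtain ⟨ℓ, hm⟩ := hker
  exact key h hh ℓ hm
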